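/- Let S, A be nonempty finite types, let ρ be a density matrix indexed by (S×A)×(S×A), and let 1 ≤ d ≤ |S|. Then 0 ≤ C^(d)_{S|A}(ρ) ≤ ε^(d)(tr_A ρ). -/

import Mathlib

open Matrix
open scoped ComplexOrder Kronecker Classical

/-- Sum of the `d` largest eigenvalues (with multiplicity, decreasing order)
of a Hermitian matrix. -/
noncomputable def sumTopEigs {n : Type*} [Fintype n] [DecidableEq n]
    {A : Matrix n n ℂ} (hA : A.IsHermitian) (d : ℕ) : ℝ :=
  ((((Finset.univ.val.map hA.eigenvalues).sort (· ≤ ·)).reverse.take d)).sum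

/-- `ε^(d)(A) = 1 - Σ_{i=1}^d λ_i^↓(A)` for Hermitian `A` (junk value `0` otherwise). -/
noncomputable def epsD {n : Type*} [Fintype n] [DecidableEq n]
    (A : Matrix n n ℂ) (d : ℕ) : ℝ :=
  if h : A.IsHermitian then 1 - sumTopEigs h d else 0

/-- `|ψ⟩⟨ψ|`. -/
noncomputable def outer {n : Type*} (ψ : n → ℂ) : Matrix n n ℂ :=
  fun i j => ψ i * star (ψ j)

/-- Partial trace over the second tensor factor. -/
noncomputable def ptraceR {S R : Type*} [Fintype R] (M : Matrix (S × R) (S × R) ℂ) :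
    Matrix S S ℂ :=
  fun s s' => ∑ r, M (s, r) (s', r)

/-- Partial trace over the third tensor factor. -/
noncomputable def ptrace3 {S R A : Type*} [Fintype A] (M : Matrix (S × R × A) (S × R × A) ℂ) :
    Matrix (S × R) (S × R) ℂ :=
  fun p q => ∑ a, M (p.1, p.2, a) (q.1, q.2, a)

/-- Partial trace over the second (middle) tensor factor. -/
noncomputable def ptrace2 {S R A : Type*} [Fintype R] (M : Matrix (S × R × A) (S × R × A) ℂ) :
    Matrix (S × A) (S × A) ℂ :=
  fun p q => ∑ r, M (p.1, r, p.2) (q.1, r, q.2)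

/-- Partial trace over the second and third tensor factors. -/
noncomputable def ptrace23 {S R A : Type*} [Fintype R] [Fintype A]
    (M : Matrix (S × R × A) (S × R × A) ℂ) : Matrix S S ℂ :=
  fun s s' => ∑ r, ∑ a, M (s, r, a) (s', r, a)

/-- Convex-roof extension `E^(d)_{S|R}`: the infimum over all finite pure-state
convex decompositions `ρ = Σ_k p_k |ψ_k⟩⟨ψ_k|` of `Σ_k p_k ε^(d)(tr_R |ψ_k⟩⟨ψ_k|)`. -/
noncomputable def convRoofE {S R : Type*} [Fintype S] [Fintype R] [DecidableEq S]
    (d : ℕ) (ρ : Matrix (S × R) (S × R) ℂ) : ℝ :=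
  sInf { e : ℝ | ∃ (m : ℕ) (p : Fin m → ℝ) (ψ : Fin m → (S × R → ℂ)),
    (∀ k, 0 ≤ p k) ∧ (∑ k, p k = 1) ∧
    (∀ k, star (ψ k) ⬝ᵥ ψ k = 1) ∧
    (ρ = ∑ k, (p k : ℂ) • outer (ψ k)) ∧
    e = ∑ k, p k * epsD (ptraceR (outer (ψ k))) d }

/-- Classical correlations `C^(d)_{S|A}`:
`ε^(d)(tr_A ρ)` minus the infimum over all POVMs `{M_x}` on `A` of
`Σ_x p_x ε^(d)(p_x⁻¹ tr_A((1_S ⊗ M_x) ρ))`, where `p_x = tr((1_S ⊗ M_x) ρ)`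
and terms with `p_x = 0` are omitted. -/
noncomputable def classC {S A : Type*} [Fintype S] [Fintype A] [DecidableEq S] [DecidableEq A]
    (d : ℕ) (ρ : Matrix (S × A) (S × A) ℂ) : ℝ :=
  epsD (ptraceR ρ) d -
  sInf { e : ℝ | ∃ (m : ℕ) (M : Fin m → Matrix A A ℂ),
    (∀ x, (M x).PosSemidef) ∧ (∑ x, M x = 1) ∧
    e = ∑ x,
      (if (((1 : Matrix S S ℂ) ⊗ₖ M x) * ρ).trace = 0 then 0
       else ((((1 : Matrix S S ℂ) ⊗ₖ M x) * ρ).trace).re *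
         epsD (((((1 : Matrix S S ℂ) ⊗ₖ M x) * ρ).trace)⁻¹ •
           ptraceR (((1 : Matrix S S ℂ) ⊗ₖ M x) * ρ)) d) }

section Helpers

set_option linter.unusedSectionVars false

variable {S A : Type*} [Fintype S] [Fintype A] [DecidableEq S] [DecidableEq A]

lemma ptraceR_isHermitian {M : Matrix (S × A) (S × A) ℂ} (hM : M.IsHermitian) :
    (ptraceR M).IsHermitian := by
  ext s s'
  simp only [conjTranspose_apply, ptraceR, star_sum]
  exact Finset.sum_congr rfl fun r _ => hM.apply (s, r) (s', r)

lemma ptraceR_posSemidef {M : Matrix (S × A) (S × A) ℂ} (hM : M.PosSemidef) :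
    (ptraceR M).PosSemidef := by
  refine PosSemidef.of_dotProduct_mulVec_nonneg (ptraceR_isHermitian hM.1) fun v => ?_
  have key : star v ⬝ᵥ (ptraceR M) *ᵥ v
      = ∑ r : A, star (fun p : S × A => if p.2 = r then v p.1 else 0) ⬝ᵥ
          M *ᵥ (fun p : S × A => if p.2 = r then v p.1 else 0) := by
    simp only [dotProduct, mulVec, dotProduct, Pi.star_apply,
      apply_ite (star : ℂ → ℂ), star_zero, Fintype.sum_prod_type, ite_mul, zero_mul,
      mul_ite, mul_zero, Finset.sum_ite_eq', Finset.mem_univ, if_true, ptraceR]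
    rw [Finset.sum_comm]
    refine Finset.sum_congr rfl fun r _ => ?_
    simp only [Finset.mul_sum, Finset.sum_mul, mul_assoc]
    exact Finset.sum_comm
  rw [key]
  exact Finset.sum_nonneg fun r _ => hM.dotProduct_mulVec_nonneg _

lemma ptraceR_trace (M : Matrix (S × A) (S × A) ℂ) : (ptraceR M).trace = M.trace := by
  simp [trace, ptraceR, Matrix.diag, Fintype.sum_prod_type]

lemma ptraceR_kron_comm (B : Matrix A A ℂ) (X : Matrix (S × A) (S × A) ℂ) :
    ptraceR ((1 ⊗ₖ B) * X) = ptraceR (X * (1 ⊗ₖ B)) := by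
  ext s s'
  simp only [ptraceR, Matrix.mul_apply, Matrix.kroneckerMap_apply, Matrix.one_apply,
    Fintype.sum_prod_type, ite_mul, mul_ite, one_mul, mul_one, zero_mul, mul_zero]
  refine Eq.trans (Finset.sum_congr rfl fun x _ => Finset.sum_comm) ?_
  refine Eq.trans ?_ (Finset.sum_congr rfl fun x _ => Finset.sum_comm).symm
  simp only [Finset.sum_ite_eq, Finset.sum_ite_eq', Finset.mem_univ, if_true]
  rw [Finset.sum_comm]
  exact Finset.sum_congr rfl fun a _ => Finset.sum_congr rfl fun b _ => mul_comm _ _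

lemma kron_one_hermitian {B : Matrix A A ℂ} (hB : B.IsHermitian) :
    ((1 : Matrix S S ℂ) ⊗ₖ B).IsHermitian := by
  ext ⟨s, a⟩ ⟨t, b⟩
  by_cases h : s = t
  · subst h
    simp only [conjTranspose_apply, Matrix.kroneckerMap_apply, Matrix.one_apply_eq, one_mul]
    exact hB.apply a b
  · simp [conjTranspose_apply, Matrix.one_apply, h, Ne.symm h]

lemma trace_eq_sum_eigs {n : Type*} [Fintype n] [DecidableEq n]
    {M : Matrix n n ℂ} (hM : M.IsHermitian) :
    M.trace = ∑ i, (hM.eigenvalues i : ℂ) := by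
  conv_lhs => rw [hM.spectral_theorem]
  rw [Unitary.conjStarAlgAut_apply, Matrix.trace_mul_cycle]
  rw [(Matrix.mem_unitaryGroup_iff').mp (hM.eigenvectorUnitary).2, one_mul,
    Matrix.trace_diagonal]
  rfl

lemma epsD_nonneg_of_psd {n : Type*} [Fintype n] [DecidableEq n]
    {M : Matrix n n ℂ} (hM : M.PosSemidef) (htr : M.trace = 1) (d : ℕ) :
    0 ≤ epsD M d := by
  rw [epsD, dif_pos hM.1, sub_nonneg, sumTopEigs]
  set l : List ℝ := ((Finset.univ.val.map hM.1.eigenvalues).sort (· ≤ ·)).reverse with hl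
  have hmem : ∀ x ∈ l, 0 ≤ x := by
    intro x hx
    rw [hl, List.mem_reverse, Multiset.mem_sort, Multiset.mem_map] at hx
    obtain ⟨i, _, rfl⟩ := hx
    exact hM.eigenvalues_nonneg i
  have hsum : l.sum = 1 := by
    have h1 : l.sum = ∑ i, hM.1.eigenvalues i := by
      rw [hl, List.sum_reverse]
      have hse := Multiset.sort_eq (α := ℝ) (Finset.univ.val.map hM.1.eigenvalues) (· ≤ ·)
      calc ((Finset.univ.val.map hM.1.eigenvalues).sort (· ≤ ·)).sum
          = ((Finset.univ.val.map hM.1.eigenvalues).sort (· ≤ ·) : Multiset ℝ).sum := by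
            rw [Multiset.sum_coe]
        _ = _ := by rw [hse]; rfl
    have h2 : ((∑ i, hM.1.eigenvalues i : ℝ) : ℂ) = 1 := by
      push_cast
      rw [← trace_eq_sum_eigs hM.1, htr]
    rw [h1]
    exact_mod_cast h2
  calc (l.take d).sum ≤ (l.take d).sum + (l.drop d).sum := by
        have : 0 ≤ (l.drop d).sum :=
          List.sum_nonneg fun x hx => hmem x (List.mem_of_mem_drop hx)
        linarith
    _ = l.sum := by rw [← List.sum_append, List.take_append_drop]
    _ = 1 := hsum

lemma posSemidef_smul_complex {n : Type*} [Fintype n] {M : Matrix n n ℂ}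
    (hM : M.PosSemidef) {c : ℂ} (hc : 0 ≤ c) : (c • M).PosSemidef := by
  refine PosSemidef.of_dotProduct_mulVec_nonneg ?_ ?_
  · have hcstar : star c = c := by
      rw [Complex.nonneg_iff] at hc
      simp [Complex.ext_iff, Complex.star_def, Complex.conj_re, Complex.conj_im, ← hc.2]
    rw [IsHermitian, conjTranspose_smul, hcstar, hM.1.eq]
  · intro x
    rw [smul_mulVec, dotProduct_smul]
    exact mul_nonneg hc (hM.dotProduct_mulVec_nonneg x)

lemma psd_trace_nonneg {n : Type*} [Fintype n] [DecidableEq n] {M : Matrix n n ℂ}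
    (hM : M.PosSemidef) : 0 ≤ M.trace := by
  rw [trace]
  refine Finset.sum_nonneg fun i _ => ?_
  have h := hM.dotProduct_mulVec_nonneg (Pi.single i 1)
  simpa [dotProduct, mulVec, Pi.single_apply, apply_ite (star : ℂ → ℂ), mul_ite, ite_mul,
    mul_zero, zero_mul, Finset.sum_ite_eq, Finset.sum_ite_eq', Matrix.diag] using h

open scoped MatrixOrder in
lemma kron_mul_psd {M : Matrix A A ℂ} (hM : M.PosSemidef)
    {ρ : Matrix (S × A) (S × A) ℂ} (hρ : ρ.PosSemidef) :
    (ptraceR (((1 : Matrix S S ℂ) ⊗ₖ M) * ρ)).PosSemidef := by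
  set B := CFC.sqrt M with hBdef
  have hB : B.IsHermitian := (Matrix.nonneg_iff_posSemidef.mp (CFC.sqrt_nonneg M)).1
  have hK : ((1 : Matrix S S ℂ) ⊗ₖ B).IsHermitian := kron_one_hermitian hB
  have h1 : (1 : Matrix S S ℂ) ⊗ₖ M
      = ((1 : Matrix S S ℂ) ⊗ₖ B) * ((1 : Matrix S S ℂ) ⊗ₖ B) := by
    rw [← Matrix.mul_kronecker_mul, one_mul, CFC.sqrt_mul_sqrt_self M (Matrix.nonneg_iff_posSemidef.mpr hM)]
  have h2 : ptraceR (((1 : Matrix S S ℂ) ⊗ₖ M) * ρ)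
      = ptraceR (((1 : Matrix S S ℂ) ⊗ₖ B)ᴴ * ρ * ((1 : Matrix S S ℂ) ⊗ₖ B)) := by
    conv_rhs => rw [hK.eq]
    rw [h1, mul_assoc, ptraceR_kron_comm]
  rw [h2]
  exact ptraceR_posSemidef (hρ.conjTranspose_mul_mul_same _)

end Helpers

/-- for a density matrix `ρ` on `(S×A)×(S×A)` and `1 ≤ d ≤ |S|`,
`0 ≤ C^(d)_{S|A}(ρ) ≤ ε^(d)(tr_A ρ)`. -/
theorem stmt9 {S A : Type*} [Fintype S] [Fintype A] [DecidableEq S] [DecidableEq A]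
    [Nonempty S] [Nonempty A]
    (ρ : Matrix (S × A) (S × A) ℂ) (hρ : ρ.PosSemidef) (htr : ρ.trace = 1)
    (d : ℕ) (hd1 : 1 ≤ d) (hdn : d ≤ Fintype.card S) :
    0 ≤ classC d ρ ∧ classC d ρ ≤ epsD (ptraceR ρ) d := by
  set T := { e : ℝ | ∃ (m : ℕ) (M : Fin m → Matrix A A ℂ),
    (∀ x, (M x).PosSemidef) ∧ (∑ x, M x = 1) ∧
    e = ∑ x,
      (if (((1 : Matrix S S ℂ) ⊗ₖ M x) * ρ).trace = 0 then 0
       else ((((1 : Matrix S S ℂ) ⊗ₖ M x) * ρ).trace).re *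
         epsD (((((1 : Matrix S S ℂ) ⊗ₖ M x) * ρ).trace)⁻¹ •
           ptraceR (((1 : Matrix S S ℂ) ⊗ₖ M x) * ρ)) d) } with hT
  have hCdef : classC d ρ = epsD (ptraceR ρ) d - sInf T := rfl
  have hnonneg : ∀ e ∈ T, (0:ℝ) ≤ e := by
    rintro e ⟨m, M, hpsd, hsum, rfl⟩
    refine Finset.sum_nonneg fun x _ => ?_
    set c : ℂ := (((1 : Matrix S S ℂ) ⊗ₖ M x) * ρ).trace with hc
    by_cases h0 : c = 0
    · rw [if_pos h0]
    · rw [if_neg h0]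
      have hτ : (ptraceR (((1 : Matrix S S ℂ) ⊗ₖ M x) * ρ)).PosSemidef :=
        kron_mul_psd (hpsd x) hρ
      have htrc : (ptraceR (((1 : Matrix S S ℂ) ⊗ₖ M x) * ρ)).trace = c :=
        ptraceR_trace _
      have hcpos : 0 ≤ c := htrc ▸ psd_trace_nonneg hτ
      have hcinv : 0 ≤ c⁻¹ := by
        rw [Complex.nonneg_iff] at hcpos ⊢
        constructor
        · rw [Complex.inv_re]
          exact div_nonneg hcpos.1 (Complex.normSq_nonneg c)
        · rw [Complex.inv_im, ← hcpos.2]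
          simp
      have hσ : ((c⁻¹ • ptraceR (((1 : Matrix S S ℂ) ⊗ₖ M x) * ρ))).PosSemidef :=
        posSemidef_smul_complex hτ hcinv
      have hσtr : ((c⁻¹ • ptraceR (((1 : Matrix S S ℂ) ⊗ₖ M x) * ρ))).trace = 1 := by
        rw [Matrix.trace_smul, htrc, smul_eq_mul, inv_mul_cancel₀ h0]
      have hcre : 0 ≤ c.re := (Complex.nonneg_iff.mp hcpos).1
      exact mul_nonneg hcre (epsD_nonneg_of_psd hσ hσtr d)
  have hmem : epsD (ptraceR ρ) d ∈ T := by
    refine ⟨1, fun _ => (1 : Matrix A A ℂ), fun _ => Matrix.PosSemidef.one, by simp, ?_⟩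
    have hkron : (1 : Matrix S S ℂ) ⊗ₖ (1 : Matrix A A ℂ) = 1 := Matrix.one_kronecker_one
    rw [Fin.sum_univ_one, hkron, one_mul, htr, if_neg one_ne_zero]
    simp
  have hbdd : BddBelow T := ⟨0, fun e he => hnonneg e he⟩
  constructor
  · rw [hCdef, sub_nonneg]
    exact csInf_le hbdd hmem
  · rw [hCdef]
    have : 0 ≤ sInf T := le_csInf ⟨_, hmem⟩ fun e he => hnonneg e he
    linarith
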